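/- Let k be a multiple of the length of every directed cycle of Λ and strictly greater than twice the length of every non-closed path of Λ. Then for any two connected components ℓ̂, ℓ̂' of Λ̂, the intersection p(ℓ̂) ∩ p(ℓ̂') of their projections to the k-cycle Δ_k is a connected subgraph of Δ_k. -/

import Mathlib

private lemma chain_lemma {k : ℕ} (P : ZMod k → Prop) (c : ZMod k) :
    ∀ t₂ t₁ : ℕ, t₁ ≤ t₂ → (∀ t, t₁ ≤ t → t ≤ t₂ → P (c + t)) →
    Relation.ReflTransGen
      (fun x y : ZMod k => (y = x + 1 ∨ x = y + 1) ∧ P x ∧ P y) (c + t₁) (c + t₂) := by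
  intro t₂
  induction t₂ with
  | zero =>
    intro t₁ h _
    simp only [Nat.le_zero.mp h]
    exact Relation.ReflTransGen.refl
  | succ m ih =>
    intro t₁ h hall
    rcases Nat.lt_or_ge t₁ (m + 1) with hlt | hge
    · have h1 : t₁ ≤ m := Nat.lt_succ_iff.mp hlt
      refine Relation.ReflTransGen.tail
        (ih t₁ h1 (fun t ht1 ht2 => hall t ht1 (le_trans ht2 (Nat.le_succ m)))) ?_
      refine ⟨Or.inl ?_, hall m h1 (Nat.le_succ m),
        hall (m + 1) (le_trans h1 (Nat.le_succ m)) le_rfl⟩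
      push_cast
      ring
    · have : t₁ = m + 1 := le_antisymm h hge
      subst this
      exact Relation.ReflTransGen.refl

private lemma helper_lemma {k : ℕ} (P : ZMod k → Prop) (a b : ZMod k)
    (h : ∃ (c : ZMod k) (t₁ t₂ : ℕ), t₁ ≤ t₂ ∧ a = c + (t₁ : ZMod k) ∧ b = c + (t₂ : ZMod k) ∧
      ∀ t, t₁ ≤ t → t ≤ t₂ → P (c + t)) :
    Relation.ReflTransGen
      (fun x y : ZMod k => (y = x + 1 ∨ x = y + 1) ∧ P x ∧ P y) a b := by
  obtain ⟨c, t₁, t₂, h12, ha, hb, hall⟩ := h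
  subst ha hb
  exact chain_lemma P c t₂ t₁ h12 hall

private lemma final_case {k : ℕ} (hk : 0 < k) (A B : Set (ZMod k))
    (hA : A = Set.univ ∨ ∃ c n, 2 * n < k ∧ A = {x | ∃ t ≤ n, x = c + (t : ZMod k)})
    (hB : B = Set.univ ∨ ∃ c n, 2 * n < k ∧ B = {x | ∃ t ≤ n, x = c + (t : ZMod k)}) :
    ∀ a ∈ A ∩ B, ∀ b ∈ A ∩ B,
      Relation.ReflTransGen
        (fun x y : ZMod k => (y = x + 1 ∨ x = y + 1) ∧ x ∈ A ∩ B ∧ y ∈ A ∩ B) a b := by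
  haveI : NeZero k := ⟨hk.ne'⟩
  have symrel : Symmetric (fun x y : ZMod k =>
      (y = x + 1 ∨ x = y + 1) ∧ x ∈ A ∩ B ∧ y ∈ A ∩ B) :=
    fun x y h => ⟨Or.symm h.1, h.2.2, h.2.1⟩
  have symRTG : Symmetric (Relation.ReflTransGen (fun x y : ZMod k =>
      (y = x + 1 ∨ x = y + 1) ∧ x ∈ A ∩ B ∧ y ∈ A ∩ B)) :=
    fun x y h => by
      induction h with
      | refl => exact Relation.ReflTransGen.refl
      | tail _ hbc ih => exact Relation.ReflTransGen.head (symrel hbc) ih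
  intro a ha b hb
  rcases hA with hA | ⟨c, n, hn, hA⟩
  · rcases hB with hB | ⟨c', n', hn', hB⟩
    · -- both univ
      apply helper_lemma
      refine ⟨a, 0, (b - a).val, Nat.zero_le _, by simp, ?_, ?_⟩
      · rw [ZMod.natCast_zmod_val]; ring
      · intro t _ _; simp [hA, hB]
    · -- A univ, B arc
      subst hA hB
      obtain ⟨-, t₁, ht₁, rfl⟩ := ha
      obtain ⟨-, t₂, ht₂, rfl⟩ := hb
      have key : ∀ u₁ u₂ : ℕ, u₁ ≤ u₂ → u₁ ≤ n' → u₂ ≤ n' →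
          Relation.ReflTransGen
            (fun x y : ZMod k => (y = x + 1 ∨ x = y + 1) ∧
              x ∈ Set.univ ∩ {x | ∃ t ≤ n', x = c' + (t : ZMod k)} ∧
              y ∈ Set.univ ∩ {x | ∃ t ≤ n', x = c' + (t : ZMod k)})
            (c' + (u₁ : ZMod k)) (c' + (u₂ : ZMod k)) := by
        intro u₁ u₂ h12 h1 h2
        apply helper_lemma
        exact ⟨c', u₁, u₂, h12, rfl, rfl,
          fun t ht1 ht2 => ⟨Set.mem_univ _, ⟨t, by omega, rfl⟩⟩⟩
      rcases le_total t₁ t₂ with h | h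
      · exact key t₁ t₂ h ht₁ ht₂
      · exact symRTG (key t₂ t₁ h ht₂ ht₁)
  · rcases hB with hB | ⟨c', n', hn', hB⟩
    · -- A arc, B univ
      subst hA hB
      obtain ⟨⟨t₁, ht₁, rfl⟩, -⟩ := ha
      obtain ⟨⟨t₂, ht₂, rfl⟩, -⟩ := hb
      have key : ∀ u₁ u₂ : ℕ, u₁ ≤ u₂ → u₁ ≤ n → u₂ ≤ n →
          Relation.ReflTransGen
            (fun x y : ZMod k => (y = x + 1 ∨ x = y + 1) ∧
              x ∈ {x | ∃ t ≤ n, x = c + (t : ZMod k)} ∩ Set.univ ∧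
              y ∈ {x | ∃ t ≤ n, x = c + (t : ZMod k)} ∩ Set.univ)
            (c + (u₁ : ZMod k)) (c + (u₂ : ZMod k)) := by
        intro u₁ u₂ h12 h1 h2
        apply helper_lemma
        exact ⟨c, u₁, u₂, h12, rfl, rfl,
          fun t ht1 ht2 => ⟨⟨t, by omega, rfl⟩, Set.mem_univ _⟩⟩
      rcases le_total t₁ t₂ with h | h
      · exact key t₁ t₂ h ht₁ ht₂
      · exact symRTG (key t₂ t₁ h ht₂ ht₁)
    · -- both arcs
      subst hA hB
      obtain ⟨⟨t₁, ht₁, ha1⟩, u₁, hu₁, ha2⟩ := ha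
      obtain ⟨⟨t₂, ht₂, hb1⟩, u₂, hu₂, hb2⟩ := hb
      have H : ∀ (a b : ZMod k) (t₁ t₂ u₁ u₂ : ℕ), t₁ ≤ t₂ → t₂ ≤ n → u₁ ≤ n' → u₂ ≤ n' →
          a = c + (t₁ : ZMod k) → a = c' + (u₁ : ZMod k) →
          b = c + (t₂ : ZMod k) → b = c' + (u₂ : ZMod k) →
          Relation.ReflTransGen
            (fun x y : ZMod k => (y = x + 1 ∨ x = y + 1) ∧
              x ∈ {x | ∃ t ≤ n, x = c + (t : ZMod k)} ∩ {x | ∃ t ≤ n', x = c' + (t : ZMod k)} ∧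
              y ∈ {x | ∃ t ≤ n, x = c + (t : ZMod k)} ∩ {x | ∃ t ≤ n', x = c' + (t : ZMod k)})
            a b := by
        intro a b t₁ t₂ u₁ u₂ h12 ht₂' hu₁' hu₂' ha1 ha2 hb1 hb2
        have e1 : c + (t₁ : ZMod k) = c' + (u₁ : ZMod k) := by rw [← ha1, ha2]
        have e2 : c + (t₂ : ZMod k) = c' + (u₂ : ZMod k) := by rw [← hb1, hb2]
        have hcc : (t₂ : ZMod k) - t₁ = (u₂ : ZMod k) - u₁ := by linear_combination e2 - e1
        have hle : u₁ ≤ u₂ := by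
          by_contra hlt
          push_neg at hlt
          have hz : (((t₂ - t₁) + (u₁ - u₂) : ℕ) : ZMod k) = 0 := by
            push_cast [Nat.cast_sub h12, Nat.cast_sub (le_of_lt hlt)]
            linear_combination hcc
          have hdvd := (ZMod.natCast_eq_zero_iff _ _).mp hz
          have := Nat.le_of_dvd (by omega) hdvd
          omega
        apply helper_lemma
        refine ⟨c, t₁, t₂, h12, ha1, hb1, ?_⟩
        intro t hta htb
        refine ⟨⟨t, by omega, rfl⟩, ⟨u₁ + (t - t₁), ?_, ?_⟩⟩
        · -- u₁ + (t - t₁) ≤ n'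
          have hdiff : t₂ - t₁ = u₂ - u₁ := by
            have hq : (((t₂ - t₁) : ℕ) : ZMod k) = (((u₂ - u₁) : ℕ) : ZMod k) := by
              push_cast [Nat.cast_sub h12, Nat.cast_sub hle]
              linear_combination hcc
            have h1 := ZMod.val_cast_of_lt (show t₂ - t₁ < k by omega)
            have h2 := ZMod.val_cast_of_lt (show u₂ - u₁ < k by omega)
            rw [← h1, ← h2, hq]
          omega
        · push_cast [Nat.cast_sub hta]
          linear_combination e1
      rcases le_total t₁ t₂ with h | h
      · exact H a b t₁ t₂ u₁ u₂ h ht₂ hu₁ hu₂ ha1 ha2 hb1 hb2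
      · exact symRTG (H b a t₂ t₁ u₂ u₁ h ht₁ hu₂ hu₁ hb1 hb2 ha1 ha2)


private lemma comp_structure
    {S : Type*} [Fintype S] (S' : Set S) (φ : S → S)
    (hinj : Set.InjOn φ S')
    (k : ℕ) (hk : 0 < k)
    (Ehat : ZMod k × S → ZMod k × S → Prop)
    (hEhat : ∀ x y, Ehat x y ↔ x.2 ∈ S' ∧ y = (x.1 + 1, φ x.2))
    (hpath : ∀ (n : ℕ) (f : Fin (n + 1) → S), Function.Injective f →
      (∀ i : Fin n, f i.castSucc ∈ S' ∧ φ (f i.castSucc) = f i.succ) →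
      (∀ y, ¬ (y ∈ S' ∧ φ y = f 0)) → (f (Fin.last n) ∉ S') → 2 * n < k)
    (i₀ : ZMod k) (s₀ : S) :
    (Prod.fst '' {y | Relation.EqvGen (fun a b => Ehat a b ∨ Ehat b a) (i₀, s₀) y} = Set.univ) ∨
    (∃ (c : ZMod k) (n : ℕ), 2 * n < k ∧
      Prod.fst '' {y | Relation.EqvGen (fun a b => Ehat a b ∨ Ehat b a) (i₀, s₀) y}
        = {x | ∃ t ≤ n, x = c + (t : ZMod k)}) := by
  classical
  haveI : NeZero k := ⟨hk.ne'⟩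
  set r : ZMod k × S → ZMod k × S → Prop := fun a b => Ehat a b ∨ Ehat b a with hrdef
  set L : Set (ZMod k × S) := {y | Relation.EqvGen r (i₀, s₀) y} with hLdef
  have step : ∀ (i : ZMod k) (s : S), (i, s) ∈ L → s ∈ S' → (i + 1, φ s) ∈ L := by
    intro i s hy hs
    exact Relation.EqvGen.trans _ _ _ hy
      (Relation.EqvGen.rel _ _ (Or.inl ((hEhat (i, s) _).mpr ⟨hs, rfl⟩)))
  have stepb : ∀ (i : ZMod k) (s : S), s ∈ S' → (i + 1, φ s) ∈ L → (i, s) ∈ L := by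
    intro i s hs hy
    exact Relation.EqvGen.trans _ _ _ hy
      (Relation.EqvGen.symm _ _ (Relation.EqvGen.rel _ _ (Or.inl ((hEhat (i, s) _).mpr ⟨hs, rfl⟩))))
  by_cases hA : ∀ t, φ^[t] s₀ ∈ S'
  · left
    have reach : ∀ m : ℕ, (i₀ + (m : ZMod k), φ^[m] s₀) ∈ L := by
      intro m
      induction m with
      | zero =>
        show Relation.EqvGen r (i₀, s₀) _
        simp only [Nat.cast_zero, add_zero, Function.iterate_zero_apply]
        exact Relation.EqvGen.refl _
      | succ m ih =>
        have h1 := step _ _ ih (hA m)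
        have e1 : i₀ + ((m + 1 : ℕ) : ZMod k) = i₀ + (m : ZMod k) + 1 := by push_cast; ring
        have e2 : φ^[m + 1] s₀ = φ (φ^[m] s₀) := Function.iterate_succ_apply' φ m s₀
        rw [e1, e2]
        exact h1
    apply Set.eq_univ_of_forall
    intro j
    refine ⟨(i₀ + (((j - i₀).val : ℕ) : ZMod k), φ^[(j - i₀).val] s₀), reach _, ?_⟩
    show i₀ + _ = j
    rw [ZMod.natCast_zmod_val]
    ring
  · right
    push_neg at hA
    have hNex : ∃ t, φ^[t] s₀ ∉ S' := hA
    have hN : φ^[Nat.find hNex] s₀ ∉ S' := Nat.find_spec hNex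
    set N := Nat.find hNex with hNdef
    have hNmin : ∀ t, t < N → φ^[t] s₀ ∈ S' := fun t ht => not_not.mp (Nat.find_min hNex ht)
    set P : ℕ → Prop := fun m => ∃ x, φ^[m] x = s₀ ∧ ∀ t, t < m → φ^[t] x ∈ S' with hPdef
    have hP0 : P 0 := ⟨s₀, rfl, by omega⟩
    set M := Nat.findGreatest P (Fintype.card S) with hMdef
    have hPM : P M := Nat.findGreatest_spec (Nat.zero_le _) hP0
    obtain ⟨x, hxM, hxS⟩ := hPM
    set n := M + N with hndef
    have hall : ∀ t, t < n → φ^[t] x ∈ S' := by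
      intro t ht
      rcases Nat.lt_or_ge t M with h | h
      · exact hxS t h
      · have he : φ^[t] x = φ^[t - M] s₀ := by
          rw [← hxM, ← Function.iterate_add_apply]
          congr 1
          omega
        rw [he]
        exact hNmin _ (by omega)
    have hend : φ^[n] x ∉ S' := by
      have he : φ^[n] x = φ^[N] s₀ := by
        rw [← hxM, ← Function.iterate_add_apply]
        congr 1
        omega
      rw [he]; exact hN
    have cancel : ∀ (z : S) (m : ℕ), (∀ t, t < m → φ^[t] z ∈ S') → φ^[m] z ∉ S' →
        ∀ t t', t < t' → t' ≤ m → φ^[t] z ≠ φ^[t'] z := by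
      intro z m hzall hzend t t' hlt hle heq
      have key : ∀ u u', u ≤ u' → u' ≤ m → φ^[u] z = φ^[u'] z → z = φ^[u' - u] z := by
        intro u
        induction u with
        | zero => intro u' _ _ h; simpa using h
        | succ v ih =>
          intro u' hu hum h
          obtain ⟨w, rfl⟩ : ∃ w, u' = w + 1 := ⟨u' - 1, by omega⟩
          rw [Function.iterate_succ_apply', Function.iterate_succ_apply'] at h
          have h' : φ^[v] z = φ^[w] z := hinj (hzall v (by omega)) (hzall w (by omega)) h
          have hres := ih w (by omega) (by omega) h'
          have : w + 1 - (v + 1) = w - v := by omega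
          rw [this]
          exact hres
      have hz : z = φ^[t' - t] z := key t t' (le_of_lt hlt) hle heq
      set p := t' - t with hp
      have hp0 : 0 < p := by omega
      have hpm : p ≤ m := by omega
      have hper : ∀ q, φ^[q] z = φ^[q % p] z := by
        intro q
        induction q using Nat.strong_induction_on with
        | _ q ih =>
          rcases Nat.lt_or_ge q p with h | h
          · rw [Nat.mod_eq_of_lt h]
          · have h1 : φ^[q] z = φ^[q - p] z := by
              conv_lhs => rw [show q = (q - p) + p by omega, Function.iterate_add_apply, ← hz]
            rw [h1, ih (q - p) (by omega), Nat.mod_eq_sub_mod h]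
      apply hzend
      rw [hper m]
      have hmp : m % p < p := Nat.mod_lt m hp0
      exact hzall _ (by omega)
    have finj : Function.Injective (fun i : Fin (n + 1) => φ^[(i : ℕ)] x) := by
      intro i j hij
      rcases lt_trichotomy (i : ℕ) (j : ℕ) with h | h | h
      · exact absurd hij (cancel x n hall hend _ _ h (Nat.lt_succ_iff.mp j.isLt))
      · exact Fin.ext h
      · exact absurd hij.symm (cancel x n hall hend _ _ h (Nat.lt_succ_iff.mp i.isLt))
    have hnopred : ∀ y, ¬ (y ∈ S' ∧ φ y = x) := by
      rintro y ⟨hyS, hyx⟩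
      have hyall : ∀ t, t < n + 1 → φ^[t] y ∈ S' := by
        intro t ht
        cases t with
        | zero => simpa using hyS
        | succ u =>
          have he : φ^[u + 1] y = φ^[u] x := by
            rw [Function.iterate_succ_apply, hyx]
          rw [he]
          exact hall u (by omega)
      have hyend : φ^[n + 1] y ∉ S' := by
        have he : φ^[n + 1] y = φ^[n] x := by rw [Function.iterate_succ_apply, hyx]
        rw [he]; exact hend
      have ginj : Function.Injective (fun i : Fin (n + 2) => φ^[(i : ℕ)] y) := by
        intro i j hij
        rcases lt_trichotomy (i : ℕ) (j : ℕ) with h | h | h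
        · exact absurd hij (cancel y (n + 1) hyall hyend _ _ h (Nat.lt_succ_iff.mp j.isLt))
        · exact Fin.ext h
        · exact absurd hij.symm (cancel y (n + 1) hyall hyend _ _ h (Nat.lt_succ_iff.mp i.isLt))
      have hcard : n + 2 ≤ Fintype.card S := by
        simpa using Fintype.card_le_of_injective _ ginj
      have hPM1 : P (M + 1) := by
        refine ⟨y, ?_, ?_⟩
        · rw [Function.iterate_succ_apply, hyx, hxM]
        · intro t ht
          exact hyall t (by omega)
      have := Nat.le_findGreatest (show M + 1 ≤ Fintype.card S by omega) hPM1
      omega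
    have hkn : 2 * n < k := by
      apply hpath n (fun i : Fin (n + 1) => φ^[(i : ℕ)] x) finj
      · intro i
        constructor
        · show φ^[((i.castSucc : Fin (n + 1)) : ℕ)] x ∈ S'
          rw [Fin.coe_castSucc]
          exact hall i.1 i.isLt
        · show φ (φ^[((i.castSucc : Fin (n + 1)) : ℕ)] x) = φ^[((i.succ : Fin (n + 1)) : ℕ)] x
          rw [Fin.coe_castSucc, Fin.val_succ, Function.iterate_succ_apply']
      · intro y hy
        apply hnopred y
        simpa using hy
      · show φ^[((Fin.last n : Fin (n + 1)) : ℕ)] x ∉ S'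
        simpa using hend
    set c := i₀ - (M : ZMod k) with hcdef
    have hcM : c + (M : ZMod k) = i₀ := by rw [hcdef]; ring
    set C : Set (ZMod k × S) := {pr | ∃ t ≤ n, pr = (c + (t : ZMod k), φ^[t] x)} with hCdef
    have hx₀C : (i₀, s₀) ∈ C := by
      refine ⟨M, by omega, ?_⟩
      rw [hxM, hcM]
    have Cclosed : ∀ a ∈ C, ∀ b, r a b → b ∈ C := by
      rintro a ⟨t, htn, rfl⟩ b hab
      rcases hab with h | h
      · rw [hEhat] at h
        obtain ⟨hs, rfl⟩ := h
        have htn' : t < n := by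
          rcases Nat.lt_or_ge t n with h' | h'
          · exact h'
          · exfalso
            apply hend
            rw [show n = t by omega]
            exact hs
        refine ⟨t + 1, by omega, ?_⟩
        have e1 : (c + (t : ZMod k), φ^[t] x).1 + 1 = c + ((t + 1 : ℕ) : ZMod k) := by
          push_cast; ring
        have e2 : φ ((c + (t : ZMod k), φ^[t] x).2) = φ^[t + 1] x :=
          (Function.iterate_succ_apply' φ t x).symm
        rw [Prod.ext_iff]
        exact ⟨e1, e2⟩
      · rw [hEhat] at h
        obtain ⟨hs, heq⟩ := h
        have h1 : c + (t : ZMod k) = b.1 + 1 := congrArg Prod.fst heq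
        have h2 : φ^[t] x = φ b.2 := congrArg Prod.snd heq
        have ht0 : t ≠ 0 := by
          rintro rfl
          exact hnopred b.2 ⟨hs, h2.symm⟩
        have e : φ^[t] x = φ (φ^[t - 1] x) := by
          conv_lhs => rw [show t = (t - 1) + 1 from by omega, Function.iterate_succ_apply']
        have h3 : φ (φ^[t - 1] x) = φ b.2 := e.symm.trans h2
        have h4 : φ^[t - 1] x = b.2 := hinj (hall (t - 1) (by omega)) hs h3
        refine ⟨t - 1, by omega, ?_⟩
        rw [Prod.ext_iff]
        constructor
        · have : ((t : ℕ) : ZMod k) = ((t - 1 : ℕ) : ZMod k) + 1 := by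
            rw [Nat.cast_sub (by omega : 1 ≤ t)]
            push_cast
            ring
          rw [this] at h1
          linear_combination -h1
        · exact h4.symm
    have LsubC : ∀ y ∈ L, y ∈ C := by
      have inv : ∀ a b, Relation.EqvGen r a b → (a ∈ C ↔ b ∈ C) := by
        intro a b h
        induction h with
        | rel a b hab => exact ⟨fun ha => Cclosed a ha b hab, fun hb => Cclosed b hb a (Or.symm hab)⟩
        | refl => exact Iff.rfl
        | symm a b _ ih => exact ih.symm
        | trans a b c _ _ ih1 ih2 => exact ih1.trans ih2
      intro y hy
      exact (inv _ _ hy).mp hx₀C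
    have base : (c + (M : ZMod k), φ^[M] x) ∈ L := by
      show Relation.EqvGen r (i₀, s₀) _
      rw [hcM, hxM]
      exact Relation.EqvGen.refl _
    have up : ∀ d, M + d ≤ n → (c + ((M + d : ℕ) : ZMod k), φ^[M + d] x) ∈ L := by
      intro d
      induction d with
      | zero => intro _; exact base
      | succ d ih =>
        intro h
        have h1 := step _ _ (ih (by omega)) (hall (M + d) (by omega))
        show (c + ((M + d + 1 : ℕ) : ZMod k), φ^[M + d + 1] x) ∈ L
        have e1 : c + ((M + d + 1 : ℕ) : ZMod k) = c + ((M + d : ℕ) : ZMod k) + 1 := by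
          push_cast; ring
        have e2 : φ^[M + d + 1] x = φ (φ^[M + d] x) := Function.iterate_succ_apply' φ _ x
        rw [e1, e2]
        exact h1
    have down : ∀ d, d ≤ M → (c + ((M - d : ℕ) : ZMod k), φ^[M - d] x) ∈ L := by
      intro d
      induction d with
      | zero => intro _; exact base
      | succ d ih =>
        intro h
        have hih := ih (by omega)
        have e0 : M - d = (M - (d + 1)) + 1 := by omega
        rw [e0] at hih
        have e1 : c + (((M - (d + 1)) + 1 : ℕ) : ZMod k)
            = c + ((M - (d + 1) : ℕ) : ZMod k) + 1 := by push_cast; ring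
        have e2 : φ^[(M - (d + 1)) + 1] x = φ (φ^[M - (d + 1)] x) :=
          Function.iterate_succ_apply' φ _ x
        rw [e1, e2] at hih
        exact stepb _ _ (hall _ (by omega)) hih
    have CsubL : ∀ t, t ≤ n → (c + (t : ZMod k), φ^[t] x) ∈ L := by
      intro t ht
      rcases Nat.lt_or_ge t M with h | h
      · have hd := down (M - t) (by omega)
        rw [show M - (M - t) = t by omega] at hd
        exact hd
      · have hd := up (t - M) (by omega)
        rw [show M + (t - M) = t by omega] at hd
        exact hd
    refine ⟨c, n, hkn, ?_⟩
    ext j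
    constructor
    · rintro ⟨y, hyL, rfl⟩
      obtain ⟨t, htn, rfl⟩ := LsubC y hyL
      exact ⟨t, htn, rfl⟩
    · rintro ⟨t, htn, rfl⟩
      exact ⟨(c + (t : ZMod k), φ^[t] x), CsubL t htn, rfl⟩


/-- Let k be a multiple of the length of every directed cycle of Λ and
strictly greater than twice the length of every non-closed path of Λ.  Then for any two
connected components L, L' of Λ̂, the intersection p(L) ∩ p(L') of their projections to
the k-cycle Δ_k is a connected subgraph of Δ_k (connected as an undirected graph). -/
theorem projections_intersect_connectedly
    (S : Type*) [Fintype S] (S' S'' : Set S) (φ : S → S)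
    (hmap : ∀ s ∈ S', φ s ∈ S'')
    (hinj : Set.InjOn φ S')
    (hsurj : S'' ⊆ φ '' S')
    (k : ℕ) (hk : 0 < k)
    (E : S → S → Prop)
    (hE : ∀ a b, E a b ↔ a ∈ S' ∧ φ a = b)
    (Ehat : ZMod k × S → ZMod k × S → Prop)
    (hEhat : ∀ x y, Ehat x y ↔ x.2 ∈ S' ∧ y = (x.1 + 1, φ x.2))
    -- k is a multiple of the length of every directed cycle of Λ
    (hcyc : ∀ (n : ℕ) (f : ZMod (n + 1) → S), Function.Injective f →
      (∀ i, E (f i) (f (i + 1))) → (n + 1) ∣ k)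
    -- k exceeds twice the length of every non-closed directed path component of Λ
    (hpath : ∀ (n : ℕ) (f : Fin (n + 1) → S), Function.Injective f →
      (∀ i : Fin n, E (f i.castSucc) (f i.succ)) →
      (∀ x, ¬ E x (f 0)) → (∀ x, ¬ E (f (Fin.last n)) x) → 2 * n < k)
    -- L and L' are connected components of Λ̂
    (L L' : Set (ZMod k × S))
    (hL : ∃ x₀, L = {y | Relation.EqvGen (fun a b => Ehat a b ∨ Ehat b a) x₀ y})
    (hL' : ∃ x₀, L' = {y | Relation.EqvGen (fun a b => Ehat a b ∨ Ehat b a) x₀ y}) :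
    ∀ a ∈ (Prod.fst '' L) ∩ (Prod.fst '' L'), ∀ b ∈ (Prod.fst '' L) ∩ (Prod.fst '' L'),
      Relation.ReflTransGen
        (fun x y : ZMod k => (y = x + 1 ∨ x = y + 1) ∧
          x ∈ (Prod.fst '' L) ∩ (Prod.fst '' L') ∧
          y ∈ (Prod.fst '' L) ∩ (Prod.fst '' L')) a b := by
  have hpath' : ∀ (n : ℕ) (f : Fin (n + 1) → S), Function.Injective f →
      (∀ i : Fin n, f i.castSucc ∈ S' ∧ φ (f i.castSucc) = f i.succ) →
      (∀ y, ¬ (y ∈ S' ∧ φ y = f 0)) → (f (Fin.last n) ∉ S') → 2 * n < k := by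
    intro n f hf hedge h0 hlast
    apply hpath n f hf
    · intro i
      exact (hE _ _).mpr (hedge i)
    · intro y hy
      exact h0 y ((hE _ _).mp hy)
    · intro y hy
      exact hlast ((hE _ _).mp hy).1
  obtain ⟨⟨i₁, s₁⟩, rfl⟩ := hL
  obtain ⟨⟨i₂, s₂⟩, rfl⟩ := hL'
  exact final_case hk _ _
    (comp_structure S' φ hinj k hk Ehat hEhat hpath' i₁ s₁)
    (comp_structure S' φ hinj k hk Ehat hEhat hpath' i₂ s₂)
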